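/- For all positive integers a, μ₋, d₋ with μ₋ < a·d₋, there exists a constant C > 0, depending only on a, μ₋, d₋, such that for all t, s ∈ ℂ with |t| ≤ 1 and 0 < |s| < C, the polynomial z^{μ₋} − (s + t·z^a)^{d₋} has exactly μ₋ roots, counted with multiplicity, in the closed disk {z ∈ ℂ : |z| ≤ 1/2}. -/

import Mathlib

open scoped Classical
open Polynomial

private lemma ms_prod_le_pow {s : Multiset ℝ} {U : ℝ}
    (h : ∀ x ∈ s, 0 ≤ x ∧ x ≤ U) : s.prod ≤ U ^ Multiset.card s := by
  induction s using Multiset.induction with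
  | empty => simp
  | cons a s ih =>
    simp only [Multiset.prod_cons, Multiset.card_cons, pow_succ']
    have ha := h a (Multiset.mem_cons_self a s)
    have hs : ∀ x ∈ s, 0 ≤ x ∧ x ≤ U := fun x hx => h x (Multiset.mem_cons_of_mem hx)
    have hps : s.prod ≤ U ^ Multiset.card s := ih hs
    have hpn : 0 ≤ s.prod := Multiset.prod_nonneg fun x hx => (hs x hx).1
    exact mul_le_mul ha.2 hps hpn (ha.1.trans ha.2)

private lemma ms_pow_le_prod {s : Multiset ℝ} {L : ℝ} (hL : 0 ≤ L)
    (h : ∀ x ∈ s, L ≤ x) : L ^ Multiset.card s ≤ s.prod := by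
  induction s using Multiset.induction with
  | empty => simp
  | cons a s ih =>
    simp only [Multiset.prod_cons, Multiset.card_cons, pow_succ']
    have ha := h a (Multiset.mem_cons_self a s)
    have hs : ∀ x ∈ s, L ≤ x := fun x hx => h x (Multiset.mem_cons_of_mem hx)
    exact mul_le_mul ha (ih hs) (pow_nonneg hL _) (hL.trans ha)

/-- helper: from `ω ^ dm = x ^ μm` deduce `ω = x ^ (μm/dm)` -/
private lemma rpow_of_pow_eq {x ω : ℝ} {μm dm : ℕ} (hd : 0 < dm)
    (hx0 : 0 < x) (hω0 : 0 < ω) (heq : ω ^ dm = x ^ μm) :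
    ω = x ^ ((μm : ℝ) / (dm : ℝ)) := by
  have hD0 : (0:ℝ) < (dm:ℝ) := by exact_mod_cast hd
  have h1 : ((ω ^ dm : ℝ)) ^ ((1:ℝ)/(dm:ℝ)) = (x ^ μm : ℝ) ^ ((1:ℝ)/(dm:ℝ)) := by rw [heq]
  rw [← Real.rpow_natCast ω dm, ← Real.rpow_natCast x μm,
    ← Real.rpow_mul hω0.le, ← Real.rpow_mul hx0.le,
    mul_one_div, div_self hD0.ne', Real.rpow_one, mul_one_div] at h1
  exact h1

set_option maxHeartbeats 4000000 in
theorem stmt_0 (a μm dm : ℕ) (ha : 0 < a) (hμ : 0 < μm) (hd : 0 < dm)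
    (hμd : μm < a * dm) :
    ∃ C : ℝ, 0 < C ∧
      ∀ t s : ℂ, ‖t‖ ≤ 1 → 0 < ‖s‖ → ‖s‖ < C →
        Multiset.card
          (Multiset.filter (fun z => ‖z‖ ≤ 1 / 2)
            (Polynomial.roots
              (Polynomial.X ^ μm
                - (Polynomial.C s + Polynomial.C t * Polynomial.X ^ a) ^ dm))) = μm := by
  -- abbreviations
  set Kn : ℕ := a * dm - μm with hKn
  have hKn1 : 1 ≤ Kn := by omega
  set D : ℝ := (dm : ℝ) with hD
  set M : ℝ := (μm : ℝ) with hM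
  set Kr : ℝ := (Kn : ℝ) with hKr
  set Nn : ℕ := a * dm with hNn
  set Nr : ℝ := (Nn : ℝ) with hNr
  have hD1 : 1 ≤ D := by rw [hD]; exact_mod_cast hd
  have hM1 : 1 ≤ M := by rw [hM]; exact_mod_cast hμ
  have hK1 : 1 ≤ Kr := by rw [hKr]; exact_mod_cast hKn1
  have hN1 : 1 ≤ Nr := by
    rw [hNr]
    have : 1 ≤ Nn := by omega
    exact_mod_cast this
  have hD0 : 0 < D := by linarith
  have hM0 : 0 < M := by linarith
  have hK0 : 0 < Kr := by linarith
  have hMK : M + Kr = Nr := by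
    rw [hM, hKr, hNr, hKn, hNn]
    have h : μm + (a*dm - μm) = a*dm := by omega
    exact_mod_cast congrArg (Nat.cast (R := ℝ)) h
  set q : ℝ := D / M with hq
  set β : ℝ := D / Kr with hβ
  set δ : ℝ := Kr / D with hδ
  have hq0 : 0 < q := div_pos hD0 hM0
  have hβ0 : 0 < β := div_pos hD0 hK0
  have hδ0 : 0 < δ := div_pos hK0 hD0
  have hqD : q ≤ D := div_le_self hD0.le hM1
  have hβD : β ≤ D := div_le_self hD0.le hK1
  have hqM : q * M = D := by rw [hq]; field_simp
  have hβK : β * Kr = D := by rw [hβ]; field_simp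
  set cδ : ℝ := (1/2 : ℝ) ^ δ with hcδ
  have hcδ0 : 0 < cδ := Real.rpow_pos_of_pos (by norm_num) _
  have hcδ1 : cδ < 1 := Real.rpow_lt_one (by norm_num) (by norm_num) hδ0
  set c : ℝ := 1 - cδ with hc
  have hc0 : 0 < c := by linarith
  have hc1 : c ≤ 1 := by linarith
  set B : ℝ := (2 / c) ^ (2 * D * Nr) with hB
  have h2c0 : 0 < 2 / c := by positivity
  have h2c1 : 1 ≤ 2 / c := by rw [le_div_iff₀ hc0]; linarith
  have h2c2 : 2 ≤ 2 / c := by rw [le_div_iff₀ hc0]; nlinarith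
  have hc2c : 1/c ≤ 2 / c := (div_le_div_iff_of_pos_right hc0).mpr (by norm_num)

  have hB0 : 0 < B := Real.rpow_pos_of_pos h2c0 _
  have hB1 : 1 ≤ B := Real.one_le_rpow h2c1 (by positivity)
  set C : ℝ := min ((1:ℝ) / 2 ^ (μm + 1)) ((1 / B) ^ (M / D) / 2) with hC
  have hC0 : 0 < C := by
    apply lt_min (by positivity)
    have : (0:ℝ) < (1 / B) ^ (M / D) := Real.rpow_pos_of_pos (by positivity) _
    linarith
  refine ⟨C, hC0, ?_⟩
  intro t s ht hs0 hsC
  set σ : ℝ := ‖s‖ with hσ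
  set τ : ℝ := ‖t‖ with hτ
  have hτ0 : 0 ≤ τ := norm_nonneg t
  set p : ℂ[X] := X ^ μm - (Polynomial.C s + Polynomial.C t * X ^ a) ^ dm with hp
  have hCa : C ≤ 1 / 2 ^ (μm + 1) := min_le_left _ _
  have hCb : C ≤ (1 / B) ^ (M / D) / 2 := min_le_right _ _
  have hσ1 : σ ≤ 1 := by
    have h1 : (1:ℝ) / 2 ^ (μm + 1) ≤ 1 := by
      rw [div_le_one (by positivity)]
      exact one_le_pow₀ one_le_two
    linarith [hsC.le.trans hCa]
  have hendgame : ¬ (1 / B ≤ σ ^ q) := by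
    intro hge
    have hσlt : σ < (1 / B) ^ (M / D) := lt_of_lt_of_le hsC (by linarith [hCb])
    have h2 : σ ^ q < ((1 / B) ^ (M / D)) ^ q :=
      Real.rpow_lt_rpow hs0.le hσlt hq0
    rw [← Real.rpow_mul (by positivity)] at h2
    have h1 : M / D * q = 1 := by rw [hq]; field_simp
    rw [h1, Real.rpow_one] at h2
    linarith
  -- root equation
  have hroot_eq : ∀ z : ℂ, z ∈ p.roots → z ^ μm = (s + t * z ^ a) ^ dm := by
    intro z hz
    have hr : p.IsRoot z := (Polynomial.mem_roots'.mp hz).2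
    have : z ^ μm - (s + t * z ^ a) ^ dm = 0 := by
      simpa [hp, Polynomial.IsRoot] using hr
    exact sub_eq_zero.mp this
  -- absolute-value form of the root equation, positivity
  have hkey : ∀ z : ℂ, z ∈ p.roots →
      0 < ‖z‖ ∧
      (‖s + t * z ^ a‖) ^ dm = (‖z‖) ^ μm ∧
      ‖s + t * z ^ a‖ = (‖z‖) ^ (M / D) := by
    intro z hz
    have heq := hroot_eq z hz
    have habs : (‖s + t * z ^ a‖) ^ dm = (‖z‖) ^ μm := by
      rw [← norm_pow, ← norm_pow, heq]
    have hz0 : z ≠ 0 := by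
      intro h
      subst h
      rw [zero_pow hμ.ne', zero_pow ha.ne', mul_zero, add_zero] at heq
      have hs' : s = 0 := (pow_eq_zero_iff hd.ne').mp heq.symm
      rw [hσ, hs', norm_zero] at hs0
      exact lt_irrefl 0 hs0
    have hx0 : 0 < ‖z‖ := norm_pos_iff.mpr hz0
    have hω0 : 0 < ‖s + t * z ^ a‖ := by
      rcases (norm_nonneg (s + t * z ^ a)).lt_or_eq with h | h
      · exact h
      · exfalso
        have : (‖z‖) ^ μm = 0 := by rw [← habs, ← h, zero_pow hd.ne']
        exact (pow_ne_zero μm hx0.ne') this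
    exact ⟨hx0, habs, rpow_of_pow_eq hd hx0 hω0 habs⟩
  -- triangle inequality helpers
  have htri : ∀ u v : ℂ, ‖u - v‖ ≤ ‖u‖ + ‖v‖ := by
    intro u v
    calc ‖u - v‖ = ‖u + -v‖ := by rw [sub_eq_add_neg]
    _ ≤ ‖u‖ + ‖-v‖ := norm_add_le _ _
    _ = ‖u‖ + ‖v‖ := by rw [norm_neg]
  -- small roots
  have hsmall : ∀ z ∈ p.roots, ‖z‖ ≤ 1/2 →
      (σ/2) ^ q ≤ ‖z‖ ∧ ‖z‖ ≤ (σ/c) ^ q := by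
    intro z hz hz2
    obtain ⟨hx0, habs, hωx⟩ := hkey z hz
    set x : ℝ := ‖z‖ with hx
    set ω : ℝ := ‖s + t * z ^ a‖ with hω
    have hω0 : 0 < ω := by rw [hωx]; exact Real.rpow_pos_of_pos hx0 _
    have haeq : (a:ℝ) = M / D + δ := by
      rw [hδ, ← add_div, hMK, hNr, hNn, hD]
      push_cast
      rw [mul_div_assoc, div_self (show (dm:ℝ) ≠ 0 by exact_mod_cast hd.ne'), mul_one]
    have hxa : x ^ a ≤ cδ * ω := by
      have h1 : (x:ℝ) ^ a = ω * x ^ δ := by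
        rw [← Real.rpow_natCast x a, haeq, Real.rpow_add hx0, ← hωx]
      rw [h1, mul_comm cδ ω]
      apply mul_le_mul_of_nonneg_left _ hω0.le
      rw [hcδ]
      exact Real.rpow_le_rpow hx0.le hz2 hδ0.le
    have htxa : τ * x ^ a ≤ x ^ a := by
      apply mul_le_of_le_one_left (by positivity) ht
    have hup : ω ≤ σ + τ * x ^ a := by
      calc ω ≤ ‖s‖ + ‖t * z ^ a‖ := norm_add_le _ _
      _ = σ + τ * x ^ a := by rw [norm_mul, norm_pow]
    have hωσc : ω ≤ σ / c := by
      rw [le_div_iff₀ hc0, hc]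
      have hcω : ω - cδ * ω ≤ σ := by linarith [hup, htxa, hxa]
      calc ω * (1 - cδ) = ω - cδ * ω := by ring
      _ ≤ σ := hcω
    have hσ2ω : σ / 2 ≤ ω := by
      have h2 : σ ≤ ω + τ * x ^ a := by
        calc σ = ‖(s + t * z ^ a) - t * z ^ a‖ := by rw [hσ]; congr 1; ring
        _ ≤ ω + ‖t * z ^ a‖ := htri _ _
        _ = ω + τ * x ^ a := by rw [norm_mul, norm_pow]
      have h3 : cδ * ω ≤ ω := mul_le_of_le_one_left hω0.le hcδ1.le
      linarith [hxa, htxa]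
    have hx_eq : x = ω ^ q := by
      have := rpow_of_pow_eq hμ hω0 hx0 habs.symm
      rwa [← hD, ← hM, ← hq] at this
    constructor
    · rw [hx_eq]
      exact Real.rpow_le_rpow (by positivity) hσ2ω hq0.le
    · rw [hx_eq]
      exact Real.rpow_le_rpow hω0.le hωσc hq0.le
  -- big roots
  have hbig : ∀ z ∈ p.roots, 1/2 < ‖z‖ → 0 < τ →
      (1/(2*τ)) ^ β ≤ ‖z‖ ∧ ‖z‖ ≤ (2/τ) ^ β := by
    intro z hz hz2 hτp
    obtain ⟨hx0, habs, hωx⟩ := hkey z hz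
    set x : ℝ := ‖z‖ with hx
    set ω : ℝ := ‖s + t * z ^ a‖ with hω
    have hω0 : 0 < ω := by rw [hωx]; exact Real.rpow_pos_of_pos hx0 _
    have hωlb : 1/2^μm < ω := by
      have h1 : ((1:ℝ)/2) ^ (M/D) < x ^ (M/D) :=
        Real.rpow_lt_rpow (by norm_num) hz2 (div_pos hM0 hD0)
      have h2 : ((1:ℝ)/2) ^ M ≤ ((1:ℝ)/2) ^ (M/D) :=
        Real.rpow_le_rpow_of_exponent_ge (by norm_num) (by norm_num)
          (div_le_self hM0.le hD1)
      have h3 : ((1:ℝ)/2) ^ M = 1/2^μm := by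
        rw [hM, Real.rpow_natCast, one_div, inv_pow, one_div]
      rw [hωx, ← h3]
      exact lt_of_le_of_lt h2 h1
    have hσω : σ ≤ ω / 2 := by
      have h4 : (1:ℝ)/2^(μm+1) = (1/2^μm)/2 := by rw [pow_succ]; ring
      have := hsC.le.trans hCa
      rw [h4] at this
      linarith
    have hup : ω ≤ σ + τ * x ^ a := by
      calc ω ≤ ‖s‖ + ‖t * z ^ a‖ := norm_add_le _ _
      _ = σ + τ * x ^ a := by rw [norm_mul, norm_pow]
    have hlo2 : ω/2 ≤ τ * x ^ a := by linarith
    have hhi2 : τ * x ^ a ≤ 2 * ω := by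
      have h5 : τ * x ^ a ≤ ω + σ := by
        calc τ * x ^ a = ‖t * z ^ a‖ := by
              rw [hτ, hx, ← norm_pow, ← norm_mul]
        _ = ‖(s + t * z ^ a) - s‖ := by congr 1; ring
        _ ≤ ω + σ := htri _ _
      linarith
    have h4 : (ω/2) ^ dm ≤ (τ * x ^ a) ^ dm := pow_le_pow_left₀ (by positivity) hlo2 dm
    have h5 : (τ * x ^ a) ^ dm ≤ (2*ω) ^ dm := pow_le_pow_left₀ (by positivity) hhi2 dm
    have hexp : (τ * x ^ a) ^ dm = ω ^ dm * (τ ^ dm * x ^ Kn) := by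
      rw [mul_pow, ← pow_mul]
      have hsp : x ^ (a * dm) = x ^ μm * x ^ Kn := by
        rw [← pow_add]
        congr 1
        omega
      rw [hsp, ← habs]
      ring
    have h6 : ((1:ℝ)/2) ^ dm ≤ τ ^ dm * x ^ Kn := by
      have h4' : ω ^ dm * ((1:ℝ)/2) ^ dm ≤ ω ^ dm * (τ ^ dm * x ^ Kn) := by
        calc ω ^ dm * ((1:ℝ)/2) ^ dm = (ω/2) ^ dm := by rw [div_pow ω, one_div, inv_pow, div_eq_mul_inv]
        _ ≤ (τ * x ^ a) ^ dm := h4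
        _ = ω ^ dm * (τ ^ dm * x ^ Kn) := hexp
      exact le_of_mul_le_mul_left h4' (pow_pos hω0 dm)
    have h7 : τ ^ dm * x ^ Kn ≤ 2 ^ dm := by
      have h5' : ω ^ dm * (τ ^ dm * x ^ Kn) ≤ ω ^ dm * 2 ^ dm := by
        calc ω ^ dm * (τ ^ dm * x ^ Kn) = (τ * x ^ a) ^ dm := hexp.symm
        _ ≤ (2*ω) ^ dm := h5
        _ = ω ^ dm * 2 ^ dm := by rw [mul_pow]; ring
      exact le_of_mul_le_mul_left h5' (pow_pos hω0 dm)
    have hτd : (0:ℝ) < τ ^ dm := pow_pos hτp dm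
    have h8 : ((1:ℝ)/(2*τ)) ^ dm ≤ x ^ Kn := by
      rw [div_pow, one_pow, mul_pow, div_le_iff₀ (by positivity)]
      calc (1:ℝ) = 2 ^ dm * ((1:ℝ)/2) ^ dm := by
            rw [one_div, inv_pow, mul_inv_cancel₀ (by positivity)]
      _ ≤ 2 ^ dm * (τ ^ dm * x ^ Kn) := by
            exact mul_le_mul_of_nonneg_left h6 (by positivity)
      _ = x ^ Kn * (2 ^ dm * τ ^ dm) := by ring
    have h9 : x ^ Kn ≤ ((2:ℝ)/τ) ^ dm := by
      rw [div_pow, le_div_iff₀ hτd]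
      calc x ^ Kn * τ ^ dm = τ ^ dm * x ^ Kn := by ring
      _ ≤ 2 ^ dm := h7
    -- take Kr-th roots
    have hKne : (Kn:ℝ) * ((1:ℝ)/Kr) = 1 := by
      rw [hKr]
      field_simp
    have hxK : x = (x ^ Kn) ^ ((1:ℝ)/Kr) := by
      rw [← Real.rpow_natCast x Kn, ← Real.rpow_mul hx0.le, hKne, Real.rpow_one]
    have hdmK : (dm:ℝ) * ((1:ℝ)/Kr) = β := by
      rw [hβ, hD, mul_one_div]
    constructor
    · rw [hxK]
      calc (1/(2*τ)) ^ β = (((1:ℝ)/(2*τ)) ^ dm) ^ ((1:ℝ)/Kr) := by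
            rw [← Real.rpow_natCast ((1:ℝ)/(2*τ)) dm, ← Real.rpow_mul (by positivity), hdmK]
      _ ≤ (x ^ Kn) ^ ((1:ℝ)/Kr) :=
            Real.rpow_le_rpow (by positivity) h8 (by positivity)
    · rw [hxK]
      calc (x ^ Kn) ^ ((1:ℝ)/Kr) ≤ (((2:ℝ)/τ) ^ dm) ^ ((1:ℝ)/Kr) :=
            Real.rpow_le_rpow (by positivity) h9 (by positivity)
      _ = (2/τ) ^ β := by
            rw [← Real.rpow_natCast ((2:ℝ)/τ) dm, ← Real.rpow_mul (by positivity), hdmK]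
  rcases eq_or_ne t 0 with ht0 | ht0
  · -- t = 0 : polynomial is X^μm - C (s^dm)
    have hsne : s ≠ 0 := by
      intro h
      rw [hσ, h, norm_zero] at hs0
      exact lt_irrefl 0 hs0
    have hp0 : p = X ^ μm - Polynomial.C (s ^ dm) := by
      rw [hp, ht0, Polynomial.C_0, zero_mul, add_zero, ← Polynomial.C_pow]
    have hpne : p ≠ 0 := by
      rw [hp0]
      exact X_pow_sub_C_ne_zero hμ _
    have hsplit : p.Splits := IsAlgClosed.splits p
    have hcard : Multiset.card p.roots = μm := by
      have h1 := hsplit.natDegree_eq_card_roots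
      rw [← h1, hp0, natDegree_X_pow_sub_C]
    have hall : ∀ z ∈ p.roots, ‖z‖ ≤ 1/2 := by
      intro z hz
      have heq := hroot_eq z hz
      rw [ht0, zero_mul, add_zero] at heq
      have habs : (‖z‖) ^ μm = σ ^ dm := by
        rw [hσ, ← norm_pow, ← norm_pow, heq]
      have h2 : σ ^ dm ≤ σ := pow_le_of_le_one hs0.le hσ1 hd.ne'
      have h3 : (1:ℝ)/2^(μm+1) < (1/2)^μm := by
        rw [one_div, one_div, inv_pow]
        apply inv_strictAnti₀ (by positivity)
        exact pow_lt_pow_right₀ one_lt_two (Nat.lt_succ_self μm)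
      have h4 : (‖z‖) ^ μm < (1/2:ℝ) ^ μm := by
        calc (‖z‖) ^ μm = σ ^ dm := habs
        _ ≤ σ := h2
        _ < C := hsC
        _ ≤ 1/2^(μm+1) := hCa
        _ < (1/2)^μm := h3
      exact (lt_of_pow_lt_pow_left₀ μm (by norm_num) h4).le
    rw [Multiset.filter_eq_self.mpr hall, hcard]
  · -- t ≠ 0
    have hτp : 0 < τ := norm_pos_iff.mpr ht0
    set q0 : ℂ[X] := Polynomial.C s + Polynomial.C t * X ^ a with hq0def
    have hdegCt : (Polynomial.C t * X ^ a : ℂ[X]).degree = (a : ℕ) :=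
      degree_C_mul_X_pow a ht0
    have hdegCs : (Polynomial.C s : ℂ[X]).degree < (Polynomial.C t * X ^ a : ℂ[X]).degree := by
      rw [hdegCt]
      exact lt_of_le_of_lt degree_C_le (by exact_mod_cast ha)
    have hdeg_q0 : q0.degree = (a:ℕ) := by
      rw [hq0def, degree_add_eq_right_of_degree_lt hdegCs, hdegCt]
    have hlc_q0 : q0.leadingCoeff = t := by
      rw [hq0def, leadingCoeff_add_of_degree_lt hdegCs, leadingCoeff_C_mul_X_pow]
    have hq0ne : q0 ≠ 0 := leadingCoeff_ne_zero.mp (by rw [hlc_q0]; exact ht0)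
    have hpowne : q0 ^ dm ≠ 0 := pow_ne_zero _ hq0ne
    have hnd_q0 : q0.natDegree = a := natDegree_eq_of_degree_eq_some hdeg_q0
    have hnd_pow : (q0 ^ dm).natDegree = a * dm := by
      rw [natDegree_pow, hnd_q0, Nat.mul_comm]
    have hdeg_lt : (X ^ μm : ℂ[X]).degree < (q0 ^ dm).degree := by
      rw [degree_X_pow, degree_eq_natDegree hpowne, hnd_pow]
      exact_mod_cast hμd
    have hlc : p.leadingCoeff = -(t ^ dm) := by
      rw [hp, leadingCoeff_sub_of_degree_lt' hdeg_lt, leadingCoeff_pow, hlc_q0]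
    have hpne : p ≠ 0 :=
      leadingCoeff_ne_zero.mp (by rw [hlc]; simpa using pow_ne_zero dm ht0)
    have hnd_p : p.natDegree = Nn := by
      have hdp : p.degree = (q0 ^ dm).degree := by
        rw [hp]
        exact degree_sub_eq_right_of_degree_lt hdeg_lt
      have := natDegree_eq_of_degree_eq_some (hdp.trans (degree_eq_natDegree hpowne))
      rw [this, hnd_pow, hNn]
    have hsplit : p.Splits := IsAlgClosed.splits p
    have hcard : Multiset.card p.roots = Nn := by
      have h1 := hsplit.natDegree_eq_card_roots
      rw [← h1, hnd_p]
    -- Viète: product of absolute values of the roots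
    have hfac := hsplit.eq_prod_roots
    have hprod : σ ^ dm = τ ^ dm * ((p.roots.map norm).prod) := by
      have he0 : p.eval 0 = -(s ^ dm) := by
        rw [hp, hq0def]
        simp [zero_pow ha.ne', zero_pow hμ.ne']
      have he1 : p.eval 0 = p.leadingCoeff * ((p.roots.map (fun r => -r)).prod) := by
        conv_lhs => rw [hfac]
        rw [eval_mul, eval_C, eval_multiset_prod, Multiset.map_map]
        congr 2
        apply Multiset.map_congr rfl
        intro r _
        simp
      have h2 : ‖p.eval 0‖ = σ ^ dm := by
        rw [he0, norm_neg, norm_pow, hσ]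
      have h3 : ‖p.eval 0‖ = τ ^ dm * (p.roots.map norm).prod := by
        rw [he1, norm_mul, hlc, norm_neg, norm_pow, (by exact map_multiset_prod (normHom : ℂ →*₀ ℝ) _ : ‖(Multiset.map (fun r => -r) p.roots).prod‖ = (Multiset.map norm (Multiset.map (fun r => -r) p.roots)).prod),
          Multiset.map_map, hτ]
        congr 2
        apply Multiset.map_congr rfl
        intro r _
        exact norm_neg r
      rw [← h2, h3]
    -- partition of the roots
    set Sm : Multiset ℂ := Multiset.filter (fun z => ‖z‖ ≤ 1/2) p.roots with hSmdef
    set Bg : Multiset ℂ := Multiset.filter (fun z => ¬ (‖z‖ ≤ 1/2)) p.roots with hBgdef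
    have hSB : Sm + Bg = p.roots := Multiset.filter_add_not _ _
    set n : ℕ := Multiset.card Sm with hndef
    set m : ℕ := Multiset.card Bg with hmdef
    have hnm : n + m = Nn := by
      rw [hndef, hmdef, ← Multiset.card_add, hSB, hcard]
    have hSmb : ∀ x ∈ Sm.map norm, (σ/2)^q ≤ x ∧ x ≤ (σ/c)^q := by
      intro x hx
      obtain ⟨z, hzmem, rfl⟩ := Multiset.mem_map.mp hx
      have h := Multiset.mem_filter.mp hzmem
      exact hsmall z h.1 h.2
    have hBgb : ∀ x ∈ Bg.map norm, (1/(2*τ))^β ≤ x ∧ x ≤ (2/τ)^β := by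
      intro x hx
      obtain ⟨z, hzmem, rfl⟩ := Multiset.mem_map.mp hx
      have h := Multiset.mem_filter.mp hzmem
      exact hbig z h.1 (lt_of_not_ge h.2) hτp
    have hLs0 : (0:ℝ) ≤ (σ/2)^q := by positivity
    have hLb0 : (0:ℝ) ≤ (1/(2*τ))^β := by positivity
    have hPsm_le : (Sm.map norm).prod ≤ ((σ/c)^q) ^ n := by
      have h := ms_prod_le_pow (s := Sm.map norm) (U := (σ/c)^q)
        (fun x hx => ⟨hLs0.trans (hSmb x hx).1, (hSmb x hx).2⟩)
      rwa [Multiset.card_map] at h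
    have hPsm_ge : ((σ/2)^q) ^ n ≤ (Sm.map norm).prod := by
      have h := ms_pow_le_prod hLs0 (fun x hx => (hSmb x hx).1)
      rwa [Multiset.card_map] at h
    have hPbg_le : (Bg.map norm).prod ≤ ((2/τ)^β) ^ m := by
      have h := ms_prod_le_pow (s := Bg.map norm) (U := (2/τ)^β)
        (fun x hx => ⟨hLb0.trans (hBgb x hx).1, (hBgb x hx).2⟩)
      rwa [Multiset.card_map] at h
    have hPbg_ge : ((1/(2*τ))^β) ^ m ≤ (Bg.map norm).prod := by
      have h := ms_pow_le_prod hLb0 (fun x hx => (hBgb x hx).1)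
      rwa [Multiset.card_map] at h
    have hPsm0 : (0:ℝ) ≤ (Sm.map norm).prod :=
      Multiset.prod_nonneg (fun x hx => by
        obtain ⟨z, _, rfl⟩ := Multiset.mem_map.mp hx
        exact norm_nonneg z)
    have hPbg0 : (0:ℝ) ≤ (Bg.map norm).prod :=
      Multiset.prod_nonneg (fun x hx => by
        obtain ⟨z, _, rfl⟩ := Multiset.mem_map.mp hx
        exact norm_nonneg z)
    have hsplitprod : (p.roots.map norm).prod
        = (Sm.map norm).prod * (Bg.map norm).prod := by
      rw [← hSB, Multiset.map_add, Multiset.prod_add]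
    -- cast and exponent helpers
    have hnN : (n:ℝ) ≤ Nr := by rw [hNr]; exact_mod_cast (by omega : n ≤ Nn)
    have hmN : (m:ℝ) ≤ Nr := by rw [hNr]; exact_mod_cast (by omega : m ≤ Nn)
    have hqn_le : q * (n:ℝ) ≤ D * Nr := by
      calc q * (n:ℝ) ≤ D * (n:ℝ) := mul_le_mul_of_nonneg_right hqD (Nat.cast_nonneg n)
      _ ≤ D * Nr := mul_le_mul_of_nonneg_left hnN hD0.le
    have hβm_leN : β * (m:ℝ) ≤ D * Nr := by
      calc β * (m:ℝ) ≤ D * (m:ℝ) := mul_le_mul_of_nonneg_right hβD (Nat.cast_nonneg m)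
      _ ≤ D * Nr := mul_le_mul_of_nonneg_left hmN hD0.le
    have hσD : σ ^ dm = σ ^ (D:ℝ) := by rw [hD, Real.rpow_natCast]
    have hτinv1 : (1:ℝ) ≤ 1/τ := one_le_one_div hτp ht
    have hτmul : τ ^ dm * (1/τ) ^ (D:ℝ) = 1 := by
      rw [hD, Real.rpow_natCast, one_div, inv_pow, mul_inv_cancel₀ (pow_ne_zero _ hτp.ne')]
    -- rpow expansions of the bound powers
    have hUs : (((σ/c):ℝ)^q) ^ n = σ ^ (q*(n:ℝ)) * (1/c) ^ (q*(n:ℝ)) := by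
      rw [← Real.rpow_natCast ((σ/c)^q) n, ← Real.rpow_mul (by positivity),
        div_eq_mul_one_div σ c, Real.mul_rpow hs0.le (by positivity)]
    have hUb : (((2/τ):ℝ)^β) ^ m = 2 ^ (β*(m:ℝ)) * (1/τ) ^ (β*(m:ℝ)) := by
      rw [← Real.rpow_natCast ((2/τ)^β) m, ← Real.rpow_mul (by positivity),
        div_eq_mul_one_div (2:ℝ) τ, Real.mul_rpow (by norm_num) (by positivity)]
    have hLs : (((σ/2):ℝ)^q) ^ n = σ ^ (q*(n:ℝ)) * (1/2) ^ (q*(n:ℝ)) := by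
      rw [← Real.rpow_natCast ((σ/2)^q) n, ← Real.rpow_mul (by positivity),
        div_eq_mul_one_div σ 2, Real.mul_rpow hs0.le (by norm_num)]
    have hLb : (((1/(2*τ)):ℝ)^β) ^ m = (1/2) ^ (β*(m:ℝ)) * (1/τ) ^ (β*(m:ℝ)) := by
      rw [← Real.rpow_natCast ((1/(2*τ))^β) m, ← Real.rpow_mul (by positivity),
        show (1:ℝ)/(2*τ) = (1/2) * (1/τ) by
          rw [one_div, mul_inv, one_div, one_div],
        Real.mul_rpow (by norm_num) (by positivity)]
    rcases lt_trichotomy n μm with hltc | heqc | hgtc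
    · -- too few small roots : contradiction
      exfalso
      have hmKn : Kn + 1 ≤ m := by omega
      have hβm_ge : (D:ℝ) ≤ β * (m:ℝ) := by
        have h1 : (Kr:ℝ) ≤ (m:ℝ) := by rw [hKr]; exact_mod_cast (by omega : Kn ≤ m)
        calc D = β * Kr := hβK.symm
        _ ≤ β * (m:ℝ) := mul_le_mul_of_nonneg_left h1 hβ0.le
      have k1 : τ ^ dm * ((((σ/2):ℝ)^q) ^ n * (((1/(2*τ)):ℝ)^β) ^ m) ≤ σ ^ (D:ℝ) := by
        rw [← hσD, hprod, hsplitprod]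
        apply mul_le_mul_of_nonneg_left _ (by positivity)
        exact mul_le_mul hPsm_ge hPbg_ge (by positivity) hPsm0
      have k2 : τ ^ dm * ((((σ/2):ℝ)^q) ^ n * (((1/(2*τ)):ℝ)^β) ^ m)
          = (σ ^ (q*(n:ℝ)) * ((1/2) ^ (q*(n:ℝ)) * (1/2) ^ (β*(m:ℝ))))
            * (τ ^ dm * (1/τ) ^ (β*(m:ℝ))) := by
        rw [hLs, hLb]; ring
      have k3 : (1:ℝ) ≤ τ ^ dm * (1/τ) ^ (β*(m:ℝ)) := by
        have h1 : (1/τ) ^ (D:ℝ) ≤ (1/τ) ^ (β*(m:ℝ)) :=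
          Real.rpow_le_rpow_of_exponent_le hτinv1 hβm_ge
        calc (1:ℝ) = τ ^ dm * (1/τ) ^ (D:ℝ) := hτmul.symm
        _ ≤ τ ^ dm * (1/τ) ^ (β*(m:ℝ)) := mul_le_mul_of_nonneg_left h1 (by positivity)
      have k4 : (1:ℝ)/B ≤ (1/2) ^ (q*(n:ℝ)) * (1/2) ^ (β*(m:ℝ)) := by
        have i0 : (1/2:ℝ) ^ (q*(n:ℝ)) * (1/2) ^ (β*(m:ℝ)) = (1/2) ^ (q*(n:ℝ) + β*(m:ℝ)) :=
          (Real.rpow_add (by norm_num) _ _).symm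
        have i1 : ((1:ℝ)/2) ^ (2*(D*Nr)) ≤ (1/2) ^ (q*(n:ℝ) + β*(m:ℝ)) :=
          Real.rpow_le_rpow_of_exponent_ge (by norm_num) (by norm_num) (by linarith)
        have i2 : ((1:ℝ)/2) ^ (2*(D*Nr)) = ((2:ℝ) ^ (2*(D*Nr)))⁻¹ := by
          rw [one_div, ← Real.rpow_neg_one (2:ℝ), ← Real.rpow_mul (by norm_num),
            ← Real.rpow_neg (by norm_num), neg_one_mul, Real.rpow_neg (by norm_num)]
        have i3 : (2:ℝ) ^ (2*(D*Nr)) ≤ (2/c) ^ (2*(D*Nr)) :=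
          Real.rpow_le_rpow (by norm_num) h2c2 (by positivity)
        have i4 : (1:ℝ)/B ≤ ((2:ℝ) ^ (2*(D*Nr)))⁻¹ := by
          rw [hB, one_div, show 2*D*Nr = 2*(D*Nr) by ring]
          exact inv_anti₀ (by positivity) i3
        rw [i0]
        exact i4.trans (i2 ▸ i1)
      have k5 : σ ^ ((D:ℝ) - q) ≤ σ ^ (q*(n:ℝ)) := by
        apply Real.rpow_le_rpow_of_exponent_ge hs0 hσ1
        have h1 : (n:ℝ) ≤ M - 1 := by
          have h2 : (n:ℝ) + 1 ≤ M := by rw [hM]; exact_mod_cast hltc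
          linarith
        calc q * (n:ℝ) ≤ q * (M - 1) := mul_le_mul_of_nonneg_left h1 hq0.le
        _ = D - q := by rw [← hqM]; ring
      have k6 : σ ^ ((D:ℝ) - q) * (1/B) ≤ σ ^ (D:ℝ) := by
        calc σ ^ ((D:ℝ) - q) * (1/B)
            ≤ (σ ^ (q*(n:ℝ)) * ((1/2) ^ (q*(n:ℝ)) * (1/2) ^ (β*(m:ℝ)))) * 1 := by
              rw [mul_one]
              exact mul_le_mul k5 k4 (by positivity) (by positivity)
        _ ≤ (σ ^ (q*(n:ℝ)) * ((1/2) ^ (q*(n:ℝ)) * (1/2) ^ (β*(m:ℝ))))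
              * (τ ^ dm * (1/τ) ^ (β*(m:ℝ))) :=
              mul_le_mul_of_nonneg_left k3 (by positivity)
        _ = τ ^ dm * ((((σ/2):ℝ)^q) ^ n * (((1/(2*τ)):ℝ)^β) ^ m) := k2.symm
        _ ≤ σ ^ (D:ℝ) := k1
      have k7 : σ ^ (D:ℝ) = σ ^ ((D:ℝ) - q) * σ ^ q := by
        rw [← Real.rpow_add hs0]; ring_nf
      apply hendgame
      have hpos : (0:ℝ) < σ ^ ((D:ℝ) - q) := Real.rpow_pos_of_pos hs0 _
      rw [k7] at k6
      exact le_of_mul_le_mul_left (by linarith [k6]) hpos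
    · exact heqc
    · -- too many small roots : contradiction
      exfalso
      have hmKn : m + 1 ≤ Kn := by omega
      have hβm : β * (m:ℝ) ≤ D := by
        have h1 : (m:ℝ) ≤ Kr := by rw [hKr]; exact_mod_cast (by omega : m ≤ Kn)
        calc β * (m:ℝ) ≤ β * Kr := mul_le_mul_of_nonneg_left h1 hβ0.le
        _ = D := hβK
      have k1 : σ ^ (D:ℝ) ≤ τ ^ dm * ((((σ/c):ℝ)^q) ^ n * (((2/τ):ℝ)^β) ^ m) := by
        rw [← hσD, hprod, hsplitprod]
        apply mul_le_mul_of_nonneg_left _ (by positivity)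
        exact mul_le_mul hPsm_le hPbg_le hPbg0 (by positivity)
      have k2 : τ ^ dm * ((((σ/c):ℝ)^q) ^ n * (((2/τ):ℝ)^β) ^ m)
          = (σ ^ (q*(n:ℝ)) * ((1/c) ^ (q*(n:ℝ)) * 2 ^ (β*(m:ℝ))))
            * (τ ^ dm * (1/τ) ^ (β*(m:ℝ))) := by
        rw [hUs, hUb]; ring
      have k3 : τ ^ dm * (1/τ) ^ (β*(m:ℝ)) ≤ 1 := by
        have h1 : (1/τ) ^ (β*(m:ℝ)) ≤ (1/τ) ^ (D:ℝ) :=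
          Real.rpow_le_rpow_of_exponent_le hτinv1 hβm
        calc τ ^ dm * (1/τ) ^ (β*(m:ℝ)) ≤ τ ^ dm * (1/τ) ^ (D:ℝ) :=
          mul_le_mul_of_nonneg_left h1 (by positivity)
        _ = 1 := hτmul
      have k4 : (1/c) ^ (q*(n:ℝ)) * 2 ^ (β*(m:ℝ)) ≤ B := by
        have e1 : (1/c) ^ (q*(n:ℝ)) ≤ (2/c) ^ (D*Nr) := by
          calc (1/c) ^ (q*(n:ℝ)) ≤ (2/c) ^ (q*(n:ℝ)) :=
            Real.rpow_le_rpow (by positivity) hc2c (by positivity)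
          _ ≤ (2/c) ^ (D*Nr) := Real.rpow_le_rpow_of_exponent_le h2c1 hqn_le
        have e2 : (2:ℝ) ^ (β*(m:ℝ)) ≤ (2/c) ^ (D*Nr) := by
          calc (2:ℝ) ^ (β*(m:ℝ)) ≤ (2/c) ^ (β*(m:ℝ)) :=
            Real.rpow_le_rpow (by norm_num) h2c2 (by positivity)
          _ ≤ (2/c) ^ (D*Nr) := Real.rpow_le_rpow_of_exponent_le h2c1 hβm_leN
        calc (1/c) ^ (q*(n:ℝ)) * 2 ^ (β*(m:ℝ)) ≤ (2/c) ^ (D*Nr) * (2/c) ^ (D*Nr) :=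
          mul_le_mul e1 e2 (by positivity) (by positivity)
        _ = B := by rw [hB, ← Real.rpow_add h2c0]; ring_nf
      have k5 : σ ^ (q*(n:ℝ)) ≤ σ ^ ((D:ℝ) + q) := by
        apply Real.rpow_le_rpow_of_exponent_ge hs0 hσ1
        have h1 : (M + 1 : ℝ) ≤ (n:ℝ) := by rw [hM]; exact_mod_cast hgtc
        calc D + q = q * (M + 1) := by rw [← hqM]; ring
        _ ≤ q * (n:ℝ) := mul_le_mul_of_nonneg_left h1 hq0.le
      have k6 : σ ^ (D:ℝ) ≤ σ ^ ((D:ℝ) + q) * B := by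
        calc σ ^ (D:ℝ) ≤ τ ^ dm * ((((σ/c):ℝ)^q) ^ n * (((2/τ):ℝ)^β) ^ m) := k1
        _ = (σ ^ (q*(n:ℝ)) * ((1/c) ^ (q*(n:ℝ)) * 2 ^ (β*(m:ℝ))))
              * (τ ^ dm * (1/τ) ^ (β*(m:ℝ))) := k2
        _ ≤ (σ ^ (q*(n:ℝ)) * ((1/c) ^ (q*(n:ℝ)) * 2 ^ (β*(m:ℝ)))) * 1 :=
              mul_le_mul_of_nonneg_left k3 (by positivity)
        _ = σ ^ (q*(n:ℝ)) * ((1/c) ^ (q*(n:ℝ)) * 2 ^ (β*(m:ℝ))) := mul_one _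
        _ ≤ σ ^ (q*(n:ℝ)) * B := mul_le_mul_of_nonneg_left k4 (by positivity)
        _ ≤ σ ^ ((D:ℝ) + q) * B := mul_le_mul_of_nonneg_right k5 hB0.le
      have k7 : σ ^ ((D:ℝ) + q) = σ ^ (D:ℝ) * σ ^ q := Real.rpow_add hs0 _ _
      apply hendgame
      have hpos : (0:ℝ) < σ ^ (D:ℝ) := Real.rpow_pos_of_pos hs0 _
      rw [k7] at k6
      rw [div_le_iff₀ hB0]
      exact le_of_mul_le_mul_left (by linarith [k6]) hpos
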